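/- All eigenvalues of the adjacency matrix of the unitary Cayley graph X = (Z_n, S) are integers, i.e., the unitary Cayley graph is an integral graph. -/
import Mathlib

open Matrix Complex BigOperators Finset ZMod
open scoped Classical

-- indicator of coprimality via Möbius
lemma moeb_ind (k : ℕ) :
    (∑ d ∈ k.divisors, ((ArithmeticFunction.moebius d : ℤ) : ℂ)) = if k = 1 then 1 else 0 := by
  have h := congrArg (fun f : ArithmeticFunction ℂ => f k)
    (ArithmeticFunction.coe_moebius_mul_coe_zeta (R := ℂ))
  simp only [ArithmeticFunction.coe_mul_zeta_apply, ArithmeticFunction.one_apply] at h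
  simpa using h

-- geometric sum over multiples of d
lemma geom_mult (n : ℕ) [NeZero n] (d : ℕ) (hd : d ∣ n) (hd0 : d ≠ 0) (b : ZMod n) :
    (∑ s ∈ Finset.univ.filter (fun s : ZMod n => d ∣ s.val), stdAddChar (s * b))
      = if stdAddChar ((d : ZMod n) * b) = 1 then ((n / d : ℕ) : ℂ) else 0 := by
  have hn0 : n ≠ 0 := NeZero.ne n
  set z : ℂ := stdAddChar ((d : ZMod n) * b) with hz
  have key : (∑ s ∈ Finset.univ.filter (fun s : ZMod n => d ∣ s.val), stdAddChar (s * b))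
      = ∑ j ∈ Finset.range (n / d), z ^ j := by
    refine Finset.sum_bij' (fun s _ => s.val / d) (fun j _ => ((d * j : ℕ) : ZMod n)) ?_ ?_ ?_ ?_ ?_
    · intro s hs
      simp only [Finset.mem_filter, Finset.mem_univ, true_and] at hs
      simp only [Finset.mem_range]
      exact Nat.div_lt_div_of_lt_of_dvd hd s.val_lt
    · intro j hj
      simp only [Finset.mem_range] at hj
      have hlt : d * j < n := by
        calc d * j < d * (n / d) := (Nat.mul_lt_mul_left (Nat.pos_of_ne_zero hd0)).mpr hj
        _ = n := Nat.mul_div_cancel' hd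
      simp only [Finset.mem_filter, Finset.mem_univ, true_and]
      rw [ZMod.val_cast_of_lt hlt]
      exact Dvd.intro j rfl
    · intro s hs
      simp only [Finset.mem_filter, Finset.mem_univ, true_and] at hs
      show ((d * (s.val / d) : ℕ) : ZMod n) = s
      rw [Nat.mul_div_cancel' hs]
      exact ZMod.natCast_rightInverse s
    · intro j hj
      simp only [Finset.mem_range] at hj
      have hlt : d * j < n := by
        calc d * j < d * (n / d) := (Nat.mul_lt_mul_left (Nat.pos_of_ne_zero hd0)).mpr hj
        _ = n := Nat.mul_div_cancel' hd
      show (((d * j : ℕ) : ZMod n)).val / d = j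
      rw [ZMod.val_cast_of_lt hlt, Nat.mul_div_cancel_left j (Nat.pos_of_ne_zero hd0)]
    · intro s hs
      simp only [Finset.mem_filter, Finset.mem_univ, true_and] at hs
      show stdAddChar (s * b) = z ^ (s.val / d)
      rw [hz, ← AddChar.map_nsmul_eq_pow, nsmul_eq_mul, ← mul_assoc, ← Nat.cast_mul,
        Nat.div_mul_cancel hs, ZMod.natCast_rightInverse s]
  rw [key]
  have hzm : z ^ (n / d) = 1 := by
    rw [hz, ← AddChar.map_nsmul_eq_pow, nsmul_eq_mul, ← mul_assoc, ← Nat.cast_mul,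
      Nat.div_mul_cancel hd, ZMod.natCast_self, zero_mul, AddChar.map_zero_eq_one]
  by_cases h1 : z = 1
  · simp [h1]
  · rw [if_neg h1, _root_.geom_sum_eq h1, hzm, sub_self, zero_div]

-- Ramanujan sum is an integer
lemma ram_int (n : ℕ) [NeZero n] (b : ZMod n) :
    ∃ m : ℤ, (∑ s : ZMod n, (if Nat.gcd s.val n = 1 then (1 : ℂ) else 0) * stdAddChar (s * b))
      = (m : ℂ) := by
  have hn0 : n ≠ 0 := NeZero.ne n
  refine ⟨∑ d ∈ n.divisors, ArithmeticFunction.moebius d *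
      (if stdAddChar ((d : ZMod n) * b) = 1 then ((n / d : ℕ) : ℤ) else 0), ?_⟩
  have step1 : ∀ s : ZMod n, (if Nat.gcd s.val n = 1 then (1 : ℂ) else 0)
      = ∑ d ∈ n.divisors.filter (· ∣ s.val), ((ArithmeticFunction.moebius d : ℤ) : ℂ) := by
    intro s
    have : (Nat.gcd s.val n).divisors = n.divisors.filter (· ∣ s.val) := by
      ext d
      simp only [Nat.mem_divisors, Finset.mem_filter, Nat.dvd_gcd_iff]
      constructor
      · rintro ⟨⟨h1, h2⟩, -⟩; exact ⟨⟨h2, hn0⟩, h1⟩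
      · rintro ⟨⟨h2, -⟩, h1⟩; exact ⟨⟨h1, h2⟩, Nat.gcd_ne_zero_right hn0⟩
    rw [← moeb_ind, this]
  calc (∑ s : ZMod n, (if Nat.gcd s.val n = 1 then (1 : ℂ) else 0) * stdAddChar (s * b))
      = ∑ s : ZMod n, ∑ d ∈ n.divisors.filter (· ∣ s.val),
          ((ArithmeticFunction.moebius d : ℤ) : ℂ) * stdAddChar (s * b) := by
        refine Finset.sum_congr rfl fun s _ => ?_
        rw [step1 s, Finset.sum_mul]
    _ = ∑ s : ZMod n, ∑ d ∈ n.divisors,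
          (if d ∣ s.val then ((ArithmeticFunction.moebius d : ℤ) : ℂ) * stdAddChar (s * b) else 0) := by
        refine Finset.sum_congr rfl fun s _ => ?_
        rw [Finset.sum_filter]
    _ = ∑ d ∈ n.divisors, ∑ s : ZMod n,
          (if d ∣ s.val then ((ArithmeticFunction.moebius d : ℤ) : ℂ) * stdAddChar (s * b) else 0) :=
        Finset.sum_comm
    _ = ∑ d ∈ n.divisors, ((ArithmeticFunction.moebius d : ℤ) : ℂ) *
          ∑ s ∈ Finset.univ.filter (fun s : ZMod n => d ∣ s.val), stdAddChar (s * b) := by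
        refine Finset.sum_congr rfl fun d _ => ?_
        rw [Finset.mul_sum, ← Finset.sum_filter]
    _ = _ := by
        push_cast [apply_ite (fun x : ℤ => (x : ℂ))]
        refine Finset.sum_congr rfl fun d hd => ?_
        rw [Nat.mem_divisors] at hd
        rw [geom_mult n d hd.1 (Nat.pos_of_mem_divisors (Nat.mem_divisors.mpr hd)).ne' b]
        norm_cast
        split_ifs
        · push_cast
          congr 1
        · push_cast
          ring

/-- Adjacency matrix of the unitary Cayley graph on `ZMod n`. -/
noncomputable def ucAdj (n : ℕ) : Matrix (ZMod n) (ZMod n) ℂ :=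
  Matrix.of fun u v : ZMod n => if Nat.gcd ((u - v).val) n = 1 then 1 else 0

lemma dft_mulVec (n : ℕ) [NeZero n] (w : ZMod n → ℂ) (a : ZMod n) :
    ZMod.dft (ucAdj n *ᵥ w) a
      = (∑ s : ZMod n, (if Nat.gcd s.val n = 1 then (1 : ℂ) else 0) * stdAddChar (s * (-a)))
        * ZMod.dft w a := by
  simp only [ZMod.dft_apply, Matrix.mulVec, dotProduct, ucAdj, Matrix.of_apply,
    smul_eq_mul, Finset.mul_sum]
  rw [Finset.sum_comm]
  refine Finset.sum_congr rfl fun v _ => ?_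
  rw [Finset.sum_mul]
  refine Fintype.sum_equiv (Equiv.subRight v) _ _ fun s => ?_
  simp only [Equiv.subRight_apply]
  have : stdAddChar (-(s * a)) = stdAddChar ((s - v) * (-a)) * stdAddChar (-(v * a)) := by
    rw [← AddChar.map_add_eq_mul]
    ring_nf
  rw [this]
  ring

/-- The unitary Cayley graph is integral: every eigenvalue of its adjacency
matrix is an integer. -/
theorem uc_integral (n : ℕ) [NeZero n] (lam : ℂ)
    (h : ∃ w : ZMod n → ℂ, w ≠ 0 ∧ (ucAdj n) *ᵥ w = lam • w) :
    ∃ m : ℤ, lam = (m : ℂ) := by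
  obtain ⟨w, hw0, heig⟩ := h
  have hW : ZMod.dft w ≠ 0 := by
    intro hW
    exact hw0 ((ZMod.dft.map_eq_zero_iff).mp hW)
  obtain ⟨a, ha⟩ := Function.ne_iff.mp hW
  simp only [Pi.zero_apply] at ha
  have key := dft_mulVec n w a
  rw [heig, LinearEquiv.map_smul] at key
  simp only [Pi.smul_apply, smul_eq_mul] at key
  obtain ⟨m, hm⟩ := ram_int n (-a)
  exact ⟨m, (mul_right_cancel₀ ha key).trans hm⟩
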